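/- Let p be a prime, A a subset of Z/pZ, and k a positive integer. Then |Σ_k(A)| ≥ min{p, k(|A| − k) + 1}, where Σ_k(A) is the set of sums of k-element subsets of A. -/

import Mathlib

/-- A finset `S` of an abelian group is `k`-barycentric if it has `k` elements
and the sum of its elements equals `k • g` for some `g ∈ S`. -/
def IsBarycentric {G : Type*} [AddCommGroup G] (k : ℕ) (S : Finset G) : Prop :=
  S.card = k ∧ ∃ g ∈ S, ∑ x ∈ S, x = k • g

/-- The `k`-th barycentric Olson constant: the smallest `ℓ` such that every subset
of `G` with at least `ℓ` elements contains a `k`-barycentric subset. -/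
noncomputable def BO (k : ℕ) (G : Type*) [AddCommGroup G] [Fintype G] : ℕ :=
  sInf {ℓ : ℕ | ∀ A : Finset G, ℓ ≤ A.card → ∃ B ⊆ A, IsBarycentric k B}

/-- The 2-rank of a finite abelian group `G`: the number of invariant factors of `G`
divisible by 2, equivalently `log₂` of the number of solutions of `2 • g = 0`. -/
noncomputable def twoRank (G : Type*) [AddCommGroup G] : ℕ :=
  Nat.log 2 (Nat.card {g : G // 2 • g = 0})


section DSHaux

open Polynomial Finset

variable {F : Type*} [Field F] [DecidableEq F]

lemma dsh_L1 (S : Finset F) (d : ℕ) (hd : d < S.card) :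
    ∑ a ∈ S, a ^ d * Lagrange.nodalWeight S id a
      = if d + 1 = S.card then 1 else 0 := by
  classical
  have hinj : Set.InjOn (id : F → F) S := Function.injective_id.injOn
  have hX : (X ^ d : F[X]) = Lagrange.interpolate S id (fun a => a ^ d) := by
    have := Lagrange.eq_interpolate (f := (X ^ d : F[X])) hinj
      (by simpa [Polynomial.degree_X_pow] using (WithBot.coe_lt_coe.mpr hd))
    simpa using this
  have hcoeff := congrArg (fun f : F[X] => f.coeff (S.card - 1)) hX
  simp only [Lagrange.interpolate_apply] at hcoeff
  rw [Polynomial.coeff_X_pow] at hcoeff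
  have hbasis : ∀ a ∈ S, (Lagrange.basis S id a).coeff (S.card - 1)
      = Lagrange.nodalWeight S id a := by
    intro a ha
    have h1 : Lagrange.basis S id a
        = C (Lagrange.nodalWeight S id a) * Lagrange.nodal (S.erase a) id := by
      rw [Lagrange.basis_eq_prod_sub_inv_mul_nodal_div ha,
        ← Lagrange.nodal_erase_eq_nodal_div ha]
    rw [h1, Polynomial.coeff_C_mul]
    have hm : (Lagrange.nodal (S.erase a) id).Monic := Lagrange.nodal_monic
    have hdeg : (Lagrange.nodal (S.erase a) id).natDegree = S.card - 1 := by
      rw [Lagrange.natDegree_nodal, card_erase_of_mem ha]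
    rw [← hdeg, hm.coeff_natDegree, mul_one]
  have : (if S.card - 1 = d then (1:F) else 0)
      = ∑ a ∈ S, a ^ d * Lagrange.nodalWeight S id a := by
    rw [hcoeff, Polynomial.finset_sum_coeff]
    refine Finset.sum_congr rfl fun a ha => ?_
    rw [Polynomial.coeff_C_mul, hbasis a ha]
  rw [← this]
  congr 1
  · simp only [eq_iff_iff]
    omega

open MvPolynomial in
lemma dsh_L2 {k : ℕ} (S : Fin k → Finset F) (t : Fin k → ℕ)
    (hS : ∀ i, (S i).card = t i + 1)
    (f : MvPolynomial (Fin k) F) (hf : f.totalDegree ≤ ∑ i, t i) :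
    MvPolynomial.coeff (Finsupp.equivFunOnFinite.symm t) f
      = ∑ s ∈ Fintype.piFinset S,
          MvPolynomial.eval s f * ∏ i, Lagrange.nodalWeight (S i) id (s i) := by
  classical
  have key : ∀ d ∈ f.support,
      MvPolynomial.coeff (Finsupp.equivFunOnFinite.symm t)
          (MvPolynomial.monomial d (MvPolynomial.coeff d f))
        = ∑ s ∈ Fintype.piFinset S,
            MvPolynomial.eval s (MvPolynomial.monomial d (MvPolynomial.coeff d f))
              * ∏ i, Lagrange.nodalWeight (S i) id (s i) := by
    intro d hd
    have hdeg : (∑ i, d i) ≤ ∑ i, t i := by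
      refine le_trans ?_ hf
      have := MvPolynomial.le_totalDegree hd
      rwa [Finsupp.sum_fintype _ _ (fun _ => rfl)] at this
    set cc := MvPolynomial.coeff d f with hcc
    have heval : ∀ s : Fin k → F,
        MvPolynomial.eval s (MvPolynomial.monomial d cc) = cc * ∏ i, s i ^ d i := by
      intro s
      rw [MvPolynomial.eval_monomial]
      congr 1
      exact Finsupp.prod_fintype _ _ (fun i => pow_zero (s i))
    have hrhs : ∑ s ∈ Fintype.piFinset S,
        MvPolynomial.eval s (MvPolynomial.monomial d cc)
          * ∏ i, Lagrange.nodalWeight (S i) id (s i)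
        = cc * ∏ i, ∑ a ∈ S i, a ^ d i * Lagrange.nodalWeight (S i) id a := by
      rw [Finset.prod_univ_sum]
      rw [Finset.mul_sum]
      refine Finset.sum_congr rfl fun s hs => ?_
      rw [heval s, mul_assoc, ← Finset.prod_mul_distrib]
    rw [hrhs, MvPolynomial.coeff_monomial]
    by_cases hdt : d = Finsupp.equivFunOnFinite.symm t
    · have hdt' : ∀ i, d i = t i := by
        intro i; rw [hdt]; rfl
      rw [if_pos hdt]
      have : ∀ i, (∑ a ∈ S i, a ^ d i * Lagrange.nodalWeight (S i) id a) = 1 := by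
        intro i
        rw [dsh_L1 (S i) (d i) (by rw [hS i, hdt' i]; omega), hS i, hdt' i, if_pos rfl]
      simp [this]
    · rw [if_neg hdt]
      have : ∃ j, d j < t j := by
        by_contra hcon
        push_neg at hcon
        have : ∀ i, d i = t i := by
          intro i
          by_contra hne
          have h1 : t i < d i := lt_of_le_of_ne (hcon i) (Ne.symm hne)
          have : ∑ i, t i < ∑ i, d i :=
            Finset.sum_lt_sum (fun j _ => hcon j) ⟨i, Finset.mem_univ i, h1⟩
          omega
        exact hdt (Finsupp.ext fun i => by rw [this i]; rfl)
      obtain ⟨j, hj⟩ := this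
      have : (∑ a ∈ S j, a ^ d j * Lagrange.nodalWeight (S j) id a) = 0 := by
        rw [dsh_L1 (S j) (d j) (by rw [hS j]; omega), hS j, if_neg (by omega)]
      rw [Finset.prod_eq_zero (Finset.mem_univ j) this, mul_zero]
  calc MvPolynomial.coeff (Finsupp.equivFunOnFinite.symm t) f
      = ∑ d ∈ f.support, MvPolynomial.coeff (Finsupp.equivFunOnFinite.symm t)
          (MvPolynomial.monomial d (MvPolynomial.coeff d f)) := by
        conv_lhs => rw [f.as_sum]
        rw [MvPolynomial.coeff_sum]
    _ = ∑ d ∈ f.support, ∑ s ∈ Fintype.piFinset S,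
          MvPolynomial.eval s (MvPolynomial.monomial d (MvPolynomial.coeff d f))
            * ∏ i, Lagrange.nodalWeight (S i) id (s i) := Finset.sum_congr rfl key
    _ = ∑ s ∈ Fintype.piFinset S,
          MvPolynomial.eval s f * ∏ i, Lagrange.nodalWeight (S i) id (s i) := by
        rw [Finset.sum_comm]
        refine Finset.sum_congr rfl fun s hs => ?_
        rw [← Finset.sum_mul]
        congr 1
        conv_rhs => rw [f.as_sum]
        rw [map_sum]

open Finset MvPolynomial

lemma dsh_coeff_sum_X_pow {R : Type*} [CommSemiring R] (k m : ℕ) (D : Fin k →₀ ℕ) :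
    MvPolynomial.coeff D ((∑ i, X i : MvPolynomial (Fin k) R) ^ m)
      = if (∑ i, D i) = m then (Nat.multinomial Finset.univ fun i => D i : R) else 0 := by
  classical
  rw [Finset.sum_pow_eq_sum_piAntidiag, MvPolynomial.coeff_sum]
  have hterm : ∀ e : Fin k → ℕ,
      MvPolynomial.coeff D ((Nat.multinomial Finset.univ e : MvPolynomial (Fin k) R)
          * ∏ i, X i ^ e i)
        = if e = ⇑D then (Nat.multinomial Finset.univ e : R) else 0 := by
    intro e
    have hmono : (∏ i, (X i : MvPolynomial (Fin k) R) ^ e i)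
        = MvPolynomial.monomial (Finsupp.equivFunOnFinite.symm e) 1 := by
      rw [← MvPolynomial.prod_X_pow_eq_monomial]
      refine (Finset.prod_subset (Finset.subset_univ _) fun i _ hi => ?_).symm
      have : (Finsupp.equivFunOnFinite.symm e) i = 0 := by
        simpa [Finsupp.mem_support_iff] using hi
      simp only [Finsupp.coe_equivFunOnFinite_symm] at this ⊢
      rw [this, pow_zero]
    have hcast : (Nat.multinomial Finset.univ e : MvPolynomial (Fin k) R)
        = MvPolynomial.C ((Nat.multinomial Finset.univ e : R)) := by
      rfl
    rw [hmono, hcast, MvPolynomial.C_mul_monomial, mul_one, MvPolynomial.coeff_monomial]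
    by_cases h : e = ⇑D
    · rw [if_pos h, if_pos (by rw [h]; exact Finsupp.equivFunOnFinite.symm_apply_apply D)]
    · rw [if_neg h, if_neg (fun hc => h (by rw [← hc]; rfl))]
  calc ∑ e ∈ piAntidiag Finset.univ m,
      MvPolynomial.coeff D ((Nat.multinomial Finset.univ e : MvPolynomial (Fin k) R)
        * ∏ i, X i ^ e i)
      = ∑ e ∈ piAntidiag Finset.univ m,
          (if e = ⇑D then (Nat.multinomial Finset.univ e : R) else 0) :=
        Finset.sum_congr rfl fun e _ => hterm e
    _ = if (⇑D : Fin k → ℕ) ∈ piAntidiag Finset.univ m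
          then (Nat.multinomial Finset.univ (⇑D) : R) else 0 := Finset.sum_ite_eq' _ _ _
    _ = if (∑ i, D i) = m then (Nat.multinomial Finset.univ fun i => D i : R) else 0 := by
        congr 1
        simp [Finset.mem_piAntidiag]

lemma prod_X_pow_eq_monomial' {R : Type*} [CommSemiring R] {k : ℕ} (e : Fin k → ℕ) :
    (∏ i, (X i : MvPolynomial (Fin k) R) ^ e i)
      = MvPolynomial.monomial (Finsupp.equivFunOnFinite.symm e) 1 := by
  classical
  rw [← MvPolynomial.prod_X_pow_eq_monomial]
  refine (Finset.prod_subset (Finset.subset_univ _) fun i _ hi => ?_).symm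
  have : (Finsupp.equivFunOnFinite.symm e) i = 0 := by
    simpa [Finsupp.mem_support_iff] using hi
  simp only [Finsupp.coe_equivFunOnFinite_symm] at this ⊢
  rw [this, pow_zero]

lemma dsh_Vexpand {R : Type*} [CommRing R] (k : ℕ) :
    (∏ i, ∏ j ∈ Finset.Ioi i, ((X j : MvPolynomial (Fin k) R) - X i))
      = ∑ π : Equiv.Perm (Fin k), Equiv.Perm.sign π •
          MvPolynomial.monomial (Finsupp.equivFunOnFinite.symm fun i => (π i : ℕ)) (1:R) := by
  classical
  have h1 := Matrix.det_vandermonde (fun i : Fin k => (X i : MvPolynomial (Fin k) R))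
  rw [← h1, ← Matrix.det_transpose, Matrix.det_apply]
  refine Finset.sum_congr rfl fun π _ => ?_
  congr 1
  rw [← prod_X_pow_eq_monomial']
  refine Finset.prod_congr rfl fun i _ => ?_
  rfl

lemma dsh_int_identity (k m : ℕ) (c : Fin k → ℕ)
    (hsum : ∑ i, c i = m + ∑ i : Fin k, (i : ℕ)) :
    (∏ i, ((c i).factorial : ℤ)) *
      MvPolynomial.coeff (Finsupp.equivFunOnFinite.symm c)
        ((∑ i, X i : MvPolynomial (Fin k) ℤ) ^ m * ∏ i, ∏ j ∈ Finset.Ioi i, (X j - X i))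
    = (m.factorial : ℤ) * ∏ i, ∏ j ∈ Finset.Ioi i, ((c j : ℤ) - (c i : ℤ)) := by
  classical
  set C : Fin k →₀ ℕ := Finsupp.equivFunOnFinite.symm c with hC
  have hCapp : ∀ i, C i = c i := fun i => rfl
  rw [dsh_Vexpand, Finset.mul_sum, MvPolynomial.coeff_sum]
  have hterm : ∀ π : Equiv.Perm (Fin k),
      (∏ i, ((c i).factorial : ℤ)) *
        MvPolynomial.coeff C ((∑ i, X i : MvPolynomial (Fin k) ℤ) ^ m *
          (Equiv.Perm.sign π •
            MvPolynomial.monomial (Finsupp.equivFunOnFinite.symm fun i => (π i : ℕ)) (1:ℤ)))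
      = Equiv.Perm.sign π • ((m.factorial : ℤ) * ∏ i, ((c i).descFactorial (π i) : ℤ)) := by
    intro π
    set P : Fin k →₀ ℕ := Finsupp.equivFunOnFinite.symm fun i => (π i : ℕ) with hP
    have hPapp : ∀ i, P i = π i := fun i => rfl
    rw [mul_smul_comm, MvPolynomial.coeff_smul, MvPolynomial.coeff_mul_monomial', mul_one]
    rw [mul_smul_comm]
    congr 1
    by_cases hle : ∀ i, (π i : ℕ) ≤ c i
    · have hPC : P ≤ C := by
        rw [Finsupp.le_def]
        intro i
        rw [hPapp, hCapp]
        exact hle i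
      rw [if_pos hPC]
      have hsub : ∀ i, (C - P) i = c i - π i := by
        intro i; rw [Finsupp.tsub_apply, hPapp, hCapp]
      have hsubsum : ∑ i, (C - P) i = m := by
        simp only [hsub]
        rw [Finset.sum_tsub_distrib Finset.univ (fun i _ => hle i)]
        rw [Equiv.sum_comp π (fun i : Fin k => (i : ℕ))]
        omega
      rw [dsh_coeff_sum_X_pow, if_pos hsubsum]
      -- now prove in ℕ and cast
      have hnat : (∏ i, (c i).factorial) * Nat.multinomial Finset.univ (fun i => (C - P) i)
          = m.factorial * ∏ i, (c i).descFactorial (π i) := by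
        have hfac : ∀ i, (c i).factorial
            = (c i).descFactorial (π i) * (c i - π i).factorial := by
          intro i
          rw [mul_comm, Nat.factorial_mul_descFactorial (hle i)]
        calc (∏ i, (c i).factorial) * Nat.multinomial Finset.univ (fun i => (C - P) i)
            = ((∏ i, (c i).descFactorial (π i)) * ∏ i, (c i - π i).factorial)
                * Nat.multinomial Finset.univ (fun i => (C - P) i) := by
              rw [← Finset.prod_mul_distrib]
              congr 1
              exact Finset.prod_congr rfl fun i _ => hfac i
          _ = (∏ i, (c i).descFactorial (π i)) *
                ((∏ i, ((fun i => (C - P) i) i).factorial) *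
                  Nat.multinomial Finset.univ (fun i => (C - P) i)) := by
              rw [mul_assoc]
              simp only [hsub]
          _ = (∏ i, (c i).descFactorial (π i)) * (∑ i, (C - P) i).factorial := by
              rw [Nat.multinomial_spec]
          _ = m.factorial * ∏ i, (c i).descFactorial (π i) := by
              rw [hsubsum, mul_comm]
      have := congrArg (fun n : ℕ => (n : ℤ)) hnat
      push_cast at this ⊢
      exact this
    · push_neg at hle
      obtain ⟨i, hi⟩ := hle
      have hnPC : ¬ P ≤ C := by
        rw [Finsupp.le_def]
        push_neg
        exact ⟨i, by rw [hPapp, hCapp]; omega⟩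
      rw [if_neg hnPC, mul_zero]
      have : ((c i).descFactorial (π i) : ℤ) = 0 := by
        rw [Nat.descFactorial_eq_zero_iff_lt.mpr hi]
        rfl
      rw [Finset.prod_eq_zero (Finset.mem_univ i) this, mul_zero]
  rw [Finset.mul_sum]
  simp only [hterm]
  have hdet : (Matrix.of fun x y : Fin k => ((c y).descFactorial x : ℤ)).det
      = ∏ i, ∏ j ∈ Finset.Ioi i, ((c j : ℤ) - (c i : ℤ)) := by
    rw [← Matrix.det_transpose]
    have htr : (Matrix.of fun x y : Fin k => ((c y).descFactorial x : ℤ)).transpose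
        = Matrix.of fun i j : Fin k => Polynomial.eval ((c i : ℤ)) (descPochhammer ℤ (j:ℕ)) := by
      ext i j
      simp [Matrix.transpose_apply, descPochhammer_eval_eq_descFactorial]
    rw [htr, ← Matrix.det_eval_matrixOfPolynomials_eq_det_vandermonde
      (fun i => (c i : ℤ)) (fun j => descPochhammer ℤ j)
      (fun j => descPochhammer_natDegree ℤ j) (fun j => monic_descPochhammer ℤ j),
      Matrix.det_vandermonde]
  rw [← hdet, Matrix.det_apply, Finset.mul_sum]
  refine Finset.sum_congr rfl fun π _ => ?_
  rw [mul_smul_comm]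
  rfl

open Finset MvPolynomial

lemma dsh_degS {R : Type*} [CommRing R] [Nontrivial R] (k : ℕ) :
    ((∑ i, X i : MvPolynomial (Fin k) R)).totalDegree ≤ 1 := by
  refine le_trans (MvPolynomial.totalDegree_finset_sum _ _) ?_
  refine Finset.sup_le fun i _ => ?_
  exact le_of_eq (MvPolynomial.totalDegree_X i)

lemma dsh_lead {R : Type*} [CommRing R] [Nontrivial R] (k : ℕ) (L : List R) :
    ∃ err : MvPolynomial (Fin k) R,
      (L.map fun x => (∑ i, X i : MvPolynomial (Fin k) R) - MvPolynomial.C x).prod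
        = (∑ i, X i) ^ L.length + err
      ∧ (err = 0 ∨ err.totalDegree < L.length) := by
  induction L with
  | nil => exact ⟨0, by simp, Or.inl rfl⟩
  | cons x L ih =>
    obtain ⟨err, he, hd⟩ := ih
    set S : MvPolynomial (Fin k) R := ∑ i, X i with hS
    refine ⟨(S - MvPolynomial.C x) * err + MvPolynomial.C (-x) * S ^ L.length, ?_, ?_⟩
    · rw [List.map_cons, List.prod_cons, he, List.length_cons]
      rw [map_neg]
      ring
    · right
      refine lt_of_le_of_lt (MvPolynomial.totalDegree_add _ _) ?_
      rw [List.length_cons]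
      have h2 : (MvPolynomial.C (-x) * S ^ L.length).totalDegree ≤ L.length := by
        refine le_trans (MvPolynomial.totalDegree_mul _ _) ?_
        rw [MvPolynomial.totalDegree_C, zero_add]
        refine le_trans (MvPolynomial.totalDegree_pow _ _) ?_
        calc L.length * S.totalDegree ≤ L.length * 1 :=
              Nat.mul_le_mul_left _ (dsh_degS k)
          _ = L.length := mul_one _
      have h1 : ((S - MvPolynomial.C x) * err).totalDegree ≤ L.length := by
        rcases hd with hd | hd
        · rw [hd, mul_zero, MvPolynomial.totalDegree_zero]
          exact Nat.zero_le _
        · refine le_trans (MvPolynomial.totalDegree_mul _ _) ?_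
          have hS1 : (S - MvPolynomial.C x).totalDegree ≤ 1 := by
            rw [sub_eq_add_neg, ← map_neg]
            refine le_trans (MvPolynomial.totalDegree_add _ _) ?_
            simp [dsh_degS k]
            exact dsh_degS k
          omega
      simp only [max_lt_iff]
      omega

lemma dsh_staircase (k n m : ℕ) (hk : 0 < k) (hkn : k ≤ n) (hm : m ≤ k * (n - k)) :
    ∃ c : Fin k → ℕ, StrictMono c ∧ (∀ i, c i ≤ n - 1)
      ∧ ∑ i, c i = m + ∑ i : Fin k, (i : ℕ) := by
  rcases eq_or_lt_of_le hkn with rfl | hlt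
  · have hm0 : m = 0 := by simpa using hm
    refine ⟨fun i => (i : ℕ), fun i j hij => hij, fun i => by have := i.isLt; simp only; omega, by
      rw [hm0, zero_add]⟩
  · obtain ⟨w, hw, hw0⟩ : ∃ w, w = n - k ∧ 0 < w := ⟨n - k, rfl, by omega⟩
    have hmw : m ≤ w * k := by rw [hw, mul_comm]; exact hm
    obtain ⟨q, r, hdm, hrw⟩ : ∃ q r, w * q + r = m ∧ r < w :=
      ⟨m / w, m % w, Nat.div_add_mod m w, Nat.mod_lt _ hw0⟩
    have hqk : q ≤ k := by
      refine Nat.le_of_mul_le_mul_left ?_ hw0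
      calc w * q ≤ m := by omega
        _ ≤ w * k := hmw
    have hqr : q = k → r = 0 := by
      intro hqk'
      subst hqk'
      omega
    refine ⟨fun i => (i : ℕ) + (if (i : ℕ) + q < k then 0 else w)
        + (if (i : ℕ) + q + 1 = k then r else 0), ?_, ?_, ?_⟩
    · intro i j hij
      have hij' : (i : ℕ) < (j : ℕ) := hij
      simp only
      split_ifs <;> omega
    · intro i
      have hik : (i : ℕ) < k := i.isLt
      simp only
      split_ifs <;> omega
    · rw [Finset.sum_add_distrib, Finset.sum_add_distrib]
      have e1 : ∑ i : Fin k, (if (i : ℕ) + q < k then 0 else w) = w * q := by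
        rw [Fin.sum_univ_eq_sum_range (fun i => if i + q < k then 0 else w) k]
        rw [Finset.sum_ite, Finset.sum_const_zero, zero_add, Finset.sum_const, smul_eq_mul]
        have hfil : (Finset.range k).filter (fun i => ¬ (i + q < k)) = Finset.Ico (k - q) k := by
          ext i
          simp only [Finset.mem_filter, Finset.mem_range, Finset.mem_Ico, not_lt]
          omega
        rw [hfil, Nat.card_Ico]
        have hq' : k - (k - q) = q := by omega
        rw [hq', mul_comm]
      have e2 : ∑ i : Fin k, (if (i : ℕ) + q + 1 = k then r else 0) = r := by
        rw [Fin.sum_univ_eq_sum_range (fun i => if i + q + 1 = k then r else 0) k]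
        rcases eq_or_lt_of_le hqk with rfl | hqlt
        · rw [hqr rfl]
          simp
        · have hcong : ∀ i ∈ Finset.range k, (if i + q + 1 = k then r else 0)
              = (if i = k - q - 1 then r else 0) := by
            intro i hi
            rw [Finset.mem_range] at hi
            congr 1
            simp only [eq_iff_iff]
            omega
          rw [Finset.sum_congr rfl hcong, Finset.sum_ite_eq' (Finset.range k) (k - q - 1)
            (fun _ => r), if_pos (Finset.mem_range.mpr (by omega))]
      rw [e1, e2]
      have hsplit : ∑ i : Fin k, ((i:ℕ) + (if (i : ℕ) + q < k then 0 else w)) =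
          (∑ i : Fin k, (i:ℕ)) + ∑ i : Fin k, (if (i : ℕ) + q < k then 0 else w) :=
        Finset.sum_add_distrib
      omega

open Finset MvPolynomial
set_option maxHeartbeats 1000000

lemma dsh_degV {R : Type*} [CommRing R] [Nontrivial R] (k : ℕ) :
    (∏ i, ∏ j ∈ Finset.Ioi i, ((X j : MvPolynomial (Fin k) R) - X i)).totalDegree
      ≤ ∑ i : Fin k, (i : ℕ) := by
  refine le_trans (MvPolynomial.totalDegree_finset_prod _ _) ?_
  have h1 : ∀ i : Fin k, (∏ j ∈ Finset.Ioi i, ((X j : MvPolynomial (Fin k) R) - X i)).totalDegree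
      ≤ (Finset.Ioi i).card := by
    intro i
    refine le_trans (MvPolynomial.totalDegree_finset_prod _ _) ?_
    calc ∑ j ∈ Finset.Ioi i, ((X j : MvPolynomial (Fin k) R) - X i).totalDegree
        ≤ ∑ j ∈ Finset.Ioi i, 1 := by
          refine Finset.sum_le_sum fun j _ => ?_
          rw [sub_eq_add_neg]
          refine le_trans (MvPolynomial.totalDegree_add _ _) ?_
          simp [MvPolynomial.totalDegree_X, MvPolynomial.totalDegree_neg]
      _ = (Finset.Ioi i).card := by rw [Finset.sum_const, smul_eq_mul, mul_one]
  refine le_trans (Finset.sum_le_sum fun i _ => h1 i) ?_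
  have h2 : ∀ i : Fin k, (Finset.Ioi i).card = k - 1 - (i : ℕ) := fun i => Fin.card_Ioi i
  simp only [h2]
  rw [Fin.sum_univ_eq_sum_range (fun i => k - 1 - i) k,
    Fin.sum_univ_eq_sum_range (fun i => i) k]
  exact le_of_eq (Finset.sum_range_reflect (fun i => i) k ▸ by
    refine Finset.sum_congr rfl fun i hi => ?_
    rfl)

lemma dsh_crux (p : ℕ) (hp : p.Prime) (A : Finset (ZMod p)) (k : ℕ) (hk : 0 < k)
    (hkn : k ≤ A.card) (m : ℕ) (hm1 : m + 1 ≤ p) (hm2 : m ≤ k * (A.card - k)) :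
    m + 1 ≤ ((A.powersetCard k).image fun S => ∑ x ∈ S, x).card := by
  classical
  haveI : Fact p.Prime := ⟨hp⟩
  haveI : NeZero p := ⟨hp.pos.ne'⟩
  set n := A.card with hn
  have hnp : n ≤ p := by
    calc n ≤ Fintype.card (ZMod p) := Finset.card_le_univ A
      _ = p := ZMod.card p
  obtain ⟨c, hcmono, hcbd, hcsum⟩ := dsh_staircase k n m hk hkn hm2
  have hsub : ∀ i : Fin k, c i + 1 ≤ A.card := fun i => by have := hcbd i; omega
  choose B hB1 hB2 using fun i : Fin k => Finset.exists_subset_card_eq (hsub i)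
  set Sig := (A.powersetCard k).image fun S => ∑ x ∈ S, x with hSig
  by_contra hcon
  push_neg at hcon
  have hcard : Sig.card ≤ m := by omega
  set L : List (ZMod p) := Sig.toList ++ List.replicate (m - Sig.card) 0 with hL
  have hlen : L.length = m := by
    rw [hL, List.length_append, List.length_replicate, Finset.length_toList]
    omega
  set S : MvPolynomial (Fin k) (ZMod p) := ∑ i, X i with hS
  set V : MvPolynomial (Fin k) (ZMod p) := ∏ i, ∏ j ∈ Finset.Ioi i, (X j - X i) with hV
  set G : MvPolynomial (Fin k) (ZMod p) := (L.map fun x => S - MvPolynomial.C x).prod with hG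
  set F : MvPolynomial (Fin k) (ZMod p) := G * V with hF
  obtain ⟨err, herr, herrdeg⟩ := dsh_lead k L
  -- the top coefficient of F is nonzero
  have hSm : MvPolynomial.coeff (Finsupp.equivFunOnFinite.symm c) (S ^ m * V) ≠ 0 := by
    have hmapS : MvPolynomial.map (Int.castRingHom (ZMod p))
        ((∑ i, X i : MvPolynomial (Fin k) ℤ) ^ m * ∏ i, ∏ j ∈ Finset.Ioi i, (X j - X i))
        = S ^ m * V := by
      simp only [map_mul, map_pow, map_sum, map_prod, map_sub, MvPolynomial.map_X, hS, hV]
    intro h0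
    have hco : ((MvPolynomial.coeff (Finsupp.equivFunOnFinite.symm c)
        ((∑ i, X i : MvPolynomial (Fin k) ℤ) ^ m
          * ∏ i, ∏ j ∈ Finset.Ioi i, (X j - X i)) : ℤ) : ZMod p) = 0 := by
      have h1 := MvPolynomial.coeff_map (Int.castRingHom (ZMod p))
        ((∑ i, X i : MvPolynomial (Fin k) ℤ) ^ m * ∏ i, ∏ j ∈ Finset.Ioi i, (X j - X i))
        (Finsupp.equivFunOnFinite.symm c)
      rw [hmapS, h0] at h1
      exact h1.symm
    have hid := dsh_int_identity k m c hcsum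
    have hid2 := congrArg (fun z : ℤ => (z : ZMod p)) hid
    simp only [Int.cast_mul] at hid2
    rw [hco, mul_zero] at hid2
    -- RHS is nonzero
    have hmfac : ((m.factorial : ℤ) : ZMod p) ≠ 0 := by
      rw [Int.cast_natCast, Ne, ZMod.natCast_eq_zero_iff]
      intro hdvd
      have := (Nat.Prime.dvd_factorial hp).mp hdvd
      omega
    have hprod : ((∏ i, ∏ j ∈ Finset.Ioi i, ((c j : ℤ) - (c i : ℤ)) : ℤ) : ZMod p) ≠ 0 := by
      push_cast
      rw [Finset.prod_ne_zero_iff]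
      intro i _
      rw [Finset.prod_ne_zero_iff]
      intro j hj
      rw [Finset.mem_Ioi] at hj
      intro hz
      have hij : c i < c j := hcmono hj
      have hcjp : c j ≤ p - 1 := le_trans (hcbd j) (by omega)
      have : ((((c j : ℤ) - (c i : ℤ)) : ℤ) : ZMod p) = 0 := by push_cast; exact hz
      rw [ZMod.intCast_zmod_eq_zero_iff_dvd] at this
      have hpos : (0 : ℤ) < (c j : ℤ) - (c i : ℤ) := by
        push_cast; omega
      have := Int.le_of_dvd hpos this
      omega
    exact (mul_ne_zero hmfac hprod) hid2.symm
  have hcoeffF : MvPolynomial.coeff (Finsupp.equivFunOnFinite.symm c) F ≠ 0 := by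
    have hFeq : F = S ^ m * V + err * V := by
      rw [hF, hG, herr, hlen, add_mul]
    rw [hFeq, MvPolynomial.coeff_add]
    have herrV : MvPolynomial.coeff (Finsupp.equivFunOnFinite.symm c) (err * V) = 0 := by
      rcases herrdeg with h0 | hdeg
      · rw [h0, zero_mul, MvPolynomial.coeff_zero]
      · refine MvPolynomial.coeff_eq_zero_of_totalDegree_lt ?_
        have hdegsum : ∑ i ∈ (Finsupp.equivFunOnFinite.symm c).support,
            (Finsupp.equivFunOnFinite.symm c) i = ∑ i, c i := by
          refine Finset.sum_subset (Finset.subset_univ _) fun i _ hi => ?_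
          simpa [Finsupp.mem_support_iff] using hi
        rw [hdegsum, hcsum]
        have h1 : (err * V).totalDegree ≤ err.totalDegree + V.totalDegree :=
          MvPolynomial.totalDegree_mul _ _
        have h2 : V.totalDegree ≤ ∑ i : Fin k, (i : ℕ) := dsh_degV k
        rw [hlen] at hdeg
        omega
    rw [herrV, add_zero]
    exact hSm
  -- F has total degree at most ∑ c
  have hdegF : F.totalDegree ≤ ∑ i, c i := by
    have hdegG : G.totalDegree ≤ m := by
      rw [hG, herr, hlen]
      have hsm : (((∑ i, X i : MvPolynomial (Fin k) (ZMod p))) ^ m).totalDegree ≤ m := by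
        refine le_trans (MvPolynomial.totalDegree_pow _ _) ?_
        calc m * ((∑ i, X i : MvPolynomial (Fin k) (ZMod p))).totalDegree
            ≤ m * 1 := Nat.mul_le_mul_left _ (dsh_degS k)
          _ = m := mul_one _
      rcases herrdeg with h0 | hdeg
      · rw [h0, add_zero]
        exact hsm
      · rw [hlen] at hdeg
        refine le_trans (MvPolynomial.totalDegree_add _ _) ?_
        exact max_le hsm (by omega)
    refine le_trans (MvPolynomial.totalDegree_mul _ _) ?_
    rw [hcsum]
    have h2 : V.totalDegree ≤ ∑ i : Fin k, (i : ℕ) := dsh_degV k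
    omega
  -- but F vanishes on the grid
  have hvanish : ∀ s ∈ Fintype.piFinset B, MvPolynomial.eval s F = 0 := by
    intro s hs
    rw [Fintype.mem_piFinset] at hs
    rw [hF, map_mul]
    by_cases hinj : Function.Injective s
    · have hmem : (∑ i, s i) ∈ Sig := by
        rw [hSig, Finset.mem_image]
        refine ⟨Finset.image s Finset.univ, ?_, ?_⟩
        · rw [Finset.mem_powersetCard]
          constructor
          · intro x hx
            rw [Finset.mem_image] at hx
            obtain ⟨i, _, rfl⟩ := hx
            exact hB1 i (hs i)
          · rw [Finset.card_image_of_injective _ hinj, Finset.card_univ, Fintype.card_fin]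
        · rw [Finset.sum_image (fun x _ y _ h => hinj h)]
      have hG0 : MvPolynomial.eval s G = 0 := by
        rw [hG, map_list_prod]
        refine List.prod_eq_zero ?_
        rw [List.map_map]
        refine List.mem_map.mpr ⟨∑ i, s i, ?_, ?_⟩
        · rw [hL]
          exact List.mem_append_left _ (Finset.mem_toList.mpr hmem)
        · simp [hS]
      rw [hG0, zero_mul]
    · obtain ⟨i, j, hij, hne⟩ : ∃ i j, s i = s j ∧ i ≠ j := by
        simp only [Function.Injective, not_forall] at hinj
        obtain ⟨i, j, h1, h2⟩ := hinj
        exact ⟨i, j, h1, h2⟩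
      have hV0 : MvPolynomial.eval s V = 0 := by
        rcases lt_or_gt_of_ne hne with hlt | hlt
        · rw [hV, map_prod]
          refine Finset.prod_eq_zero (Finset.mem_univ i) ?_
          rw [map_prod]
          refine Finset.prod_eq_zero (Finset.mem_Ioi.mpr hlt) ?_
          rw [map_sub, MvPolynomial.eval_X, MvPolynomial.eval_X, hij, sub_self]
        · rw [hV, map_prod]
          refine Finset.prod_eq_zero (Finset.mem_univ j) ?_
          rw [map_prod]
          refine Finset.prod_eq_zero (Finset.mem_Ioi.mpr hlt) ?_
          rw [map_sub, MvPolynomial.eval_X, MvPolynomial.eval_X, ← hij, sub_self]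
      rw [hV0, mul_zero]
  -- contradiction via the coefficient formula
  have := dsh_L2 B c hB2 F hdegF
  rw [Finset.sum_congr rfl (fun s hs => by rw [hvanish s hs, zero_mul])] at this
  rw [Finset.sum_const_zero] at this
  exact hcoeffF this

open Finset

theorem dias_da_silva_hamidoune (p : ℕ) (hp : p.Prime)
    (A : Finset (ZMod p)) (k : ℕ) (hk : 0 < k) :
    min (p : ℤ) (k * ((A.card : ℤ) - k) + 1) ≤
      (((A.powersetCard k).image fun S => ∑ x ∈ S, x).card : ℤ) := by
  have hp2 : 2 ≤ p := hp.two_le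
  by_cases hkn : k ≤ A.card
  · set m : ℕ := min (p - 1) (k * (A.card - k)) with hm
    have hkey : m + 1 ≤ ((A.powersetCard k).image fun S => ∑ x ∈ S, x).card :=
      dsh_crux p hp A k hk hkn m (by omega) (min_le_right _ _)
    have hcast : ((k * (A.card - k) : ℕ) : ℤ) = (k : ℤ) * ((A.card : ℤ) - k) := by
      push_cast [hkn]
      ring
    have hkey' : ((m : ℕ) : ℤ) + 1 ≤
        (((A.powersetCard k).image fun S => ∑ x ∈ S, x).card : ℤ) := by exact_mod_cast hkey
    rcases le_total (k * (A.card - k)) (p - 1) with h1 | h1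
    · refine le_trans (min_le_right _ _) ?_
      have : m = k * (A.card - k) := min_eq_right h1
      rw [this] at hkey'
      rw [← hcast]
      exact hkey'
    · refine le_trans (min_le_left _ _) ?_
      have : m = p - 1 := min_eq_left h1
      rw [this] at hkey'
      have : ((p - 1 : ℕ) : ℤ) = (p : ℤ) - 1 := by omega
      omega
  · push_neg at hkn
    have hempty : A.powersetCard k = ∅ := Finset.powersetCard_eq_empty.mpr hkn
    rw [hempty, Finset.image_empty, Finset.card_empty]
    refine le_trans (min_le_right _ _) ?_
    have h1 : (A.card : ℤ) - k ≤ -1 := by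
      have : (A.card : ℤ) < k := by exact_mod_cast hkn
      omega
    have h2 : (k : ℤ) * ((A.card : ℤ) - k) ≤ (k : ℤ) * (-1) := by
      refine mul_le_mul_of_nonneg_left h1 ?_
      exact_mod_cast Nat.zero_le k
    have h3 : (1 : ℤ) ≤ (k : ℤ) := by exact_mod_cast hk
    push_cast
    nlinarith
end DSHaux
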